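/- Suppose a top-down clustering algorithm on each recursive call on vertex set S finds a split (S₁, S₂) whose sparsity w(S₁,S₂)/(|S₁|·|S₂|) is at most α_n times the minimum sparsity over all splits of S, where (α_n) is positive and nondecreasing. Then the resulting tree T satisfies cost_G(T) ≤ (27α_n/4)·(ln n)·cost_G(T*), where T* minimizes cost_G. -/

import Mathlib

open Finset

/-- A rooted binary tree whose leaves are labeled by elements of `Fin n`. -/
inductive HTree (n : ℕ) : Type where
  | leaf : Fin n → HTree n
  | node : HTree n → HTree n → HTree n

namespace HTree

variable {n : ℕ}

/-- The list of leaf labels, left to right. -/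
def leafList : HTree n → List (Fin n)
  | .leaf v => [v]
  | .node l r => l.leafList ++ r.leafList

/-- The set of leaf labels of a tree. -/
def leaves (T : HTree n) : Finset (Fin n) := T.leafList.toFinset

/-- `T` is a hierarchical clustering tree of the whole vertex set `Fin n`:
its leaves are in one-to-one correspondence with `Fin n`. -/
def IsFullTree (T : HTree n) : Prop := T.leafList.Nodup ∧ T.leaves = Finset.univ

/-- `|leaves(T[i ∨ j])|`: the number of leaves of the subtree rooted at the
lowest common ancestor of leaves `i` and `j`. -/
def lcaSize : HTree n → Fin n → Fin n → ℕ
  | .leaf _, _, _ => 1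
  | .node l r, i, j =>
    if i ∈ l.leaves ∧ j ∈ l.leaves then l.lcaSize i j
    else if i ∈ r.leaves ∧ j ∈ r.leaves then r.lcaSize i j
    else (l.leaves ∪ r.leaves).card

/-- `cost_G(T) = Σ_{{i,j}} w_{ij} |leaves(T[i ∨ j])|`, the sum being over
unordered pairs (represented as ordered pairs `p.1 < p.2`). -/
def pairCost (w : Fin n → Fin n → ℝ) (T : HTree n) : ℝ :=
  ∑ p ∈ Finset.univ.filter (fun p : Fin n × Fin n => p.1 < p.2),
    w p.1 p.2 * (T.lcaSize p.1 p.2 : ℝ)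

/-- `w(A, B)`: total weight of edges between `A` and `B`. -/
def cut (w : Fin n → Fin n → ℝ) (A B : Finset (Fin n)) : ℝ :=
  ∑ i ∈ A, ∑ j ∈ B, w i j

/-- The sum-of-splits formulation of the cost:
`Σ over internal splits S → (S₁,S₂) of |S| ⬝ w(S₁,S₂)`. -/
def splitCost (w : Fin n → Fin n → ℝ) : HTree n → ℝ
  | .leaf _ => 0
  | .node l r =>
      ((l.leaves ∪ r.leaves).card : ℝ) * cut w l.leaves r.leaves
        + splitCost w l + splitCost w r

/-- `Subtree t T`: `t` occurs as a subtree of `T`. -/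
inductive Subtree : HTree n → HTree n → Prop
  | refl (t : HTree n) : Subtree t t
  | left {t l r : HTree n} : Subtree t l → Subtree t (.node l r)
  | right {t l r : HTree n} : Subtree t r → Subtree t (.node l r)


/-! ### Auxiliary lemmas -/
variable {w : Fin n → Fin n → ℝ}

lemma leafList_ne_nil : ∀ t : HTree n, t.leafList ≠ []
  | .leaf v => by simp [leafList]
  | .node l r => by simp [leafList, leafList_ne_nil l]

lemma leaves_nonempty (t : HTree n) : t.leaves.Nonempty := by
  rcases List.exists_mem_of_ne_nil _ (leafList_ne_nil t) with ⟨v, hv⟩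
  exact ⟨v, List.mem_toFinset.2 hv⟩

lemma leaves_node (l r : HTree n) : (HTree.node l r).leaves = l.leaves ∪ r.leaves := by
  simp [leaves, leafList]

lemma card_leaves_pos (t : HTree n) : 0 < t.leaves.card :=
  Finset.card_pos.2 (leaves_nonempty t)

lemma nodup_node {l r : HTree n} (h : (HTree.node l r).leafList.Nodup) :
    l.leafList.Nodup ∧ r.leafList.Nodup ∧ Disjoint l.leaves r.leaves := by
  rw [leafList, List.nodup_append] at h
  refine ⟨h.1, h.2.1, ?_⟩
  rw [Finset.disjoint_left]
  intro a ha hb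
  exact h.2.2 a (List.mem_toFinset.1 ha) a (List.mem_toFinset.1 hb) rfl

lemma cut_nonneg (hw : ∀ i j, 0 ≤ w i j) (A B : Finset (Fin n)) : 0 ≤ cut w A B :=
  Finset.sum_nonneg fun i _ => Finset.sum_nonneg fun j _ => hw i j

lemma cut_mono_left (hw : ∀ i j, 0 ≤ w i j) {A A' : Finset (Fin n)} (h : A' ⊆ A)
    (B : Finset (Fin n)) : cut w A' B ≤ cut w A B :=
  Finset.sum_le_sum_of_subset_of_nonneg h fun i _ _ =>
    Finset.sum_nonneg fun j _ => hw i j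

lemma cut_mono_right (hw : ∀ i j, 0 ≤ w i j) {B B' : Finset (Fin n)} (h : B' ⊆ B)
    (A : Finset (Fin n)) : cut w A B' ≤ cut w A B :=
  Finset.sum_le_sum fun i _ =>
    Finset.sum_le_sum_of_subset_of_nonneg h fun j _ _ => hw i j

lemma cut_union_left {A B : Finset (Fin n)} (h : Disjoint A B) (C : Finset (Fin n)) :
    cut w (A ∪ B) C = cut w A C + cut w B C :=
  Finset.sum_union h

lemma cut_union_right {B C : Finset (Fin n)} (h : Disjoint B C) (A : Finset (Fin n)) :
    cut w A (B ∪ C) = cut w A B + cut w A C := by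
  unfold cut
  rw [← Finset.sum_add_distrib]
  exact Finset.sum_congr rfl fun i _ => Finset.sum_union h

lemma splitCost_nonneg (hw : ∀ i j, 0 ≤ w i j) : ∀ t : HTree n, 0 ≤ splitCost w t
  | .leaf v => le_refl 0
  | .node l r => by
    have h1 := splitCost_nonneg hw l
    have h2 := splitCost_nonneg hw r
    have h3 : 0 ≤ cut w l.leaves r.leaves := cut_nonneg hw _ _
    unfold splitCost
    positivity


/-- A caterpillar tree on a nonempty list of leaves. -/
def ofList : Fin n → List (Fin n) → HTree n
  | a, [] => .leaf a
  | a, b :: l => .node (.leaf a) (ofList b l)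

lemma leafList_ofList : ∀ (a : Fin n) (l : List (Fin n)), (ofList a l).leafList = a :: l
  | _, [] => rfl
  | a, b :: l => by rw [ofList, leafList, leafList_ofList b l]; rfl

lemma exists_tree {S : Finset (Fin n)} (hS : S.Nonempty) :
    ∃ t : HTree n, t.leafList.Nodup ∧ t.leaves = S := by
  obtain ⟨a, l, hl⟩ : ∃ a l, S.toList = a :: l := by
    rcases List.exists_cons_of_ne_nil (by simpa using hS.ne_empty : S.toList ≠ []) with ⟨a, l, h⟩
    exact ⟨a, l, h⟩
  refine ⟨ofList a l, ?_, ?_⟩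
  · rw [leafList_ofList, ← hl]; exact S.nodup_toList
  · rw [leaves, leafList_ofList, ← hl]
    exact S.toList_toFinset

/-- Restriction of a tree to a subset of its leaves (pruning). -/
def restrict : HTree n → Finset (Fin n) → Option (HTree n)
  | .leaf v, A => if v ∈ A then some (.leaf v) else none
  | .node l r, A =>
    match restrict l A, restrict r A with
    | some l', some r' => some (.node l' r')
    | some l', none => some l'
    | none, some r' => some r'
    | none, none => none

/-- Leaf list of the restriction (empty if the restriction is `none`). -/
def rLeafList (t : HTree n) (A : Finset (Fin n)) : List (Fin n) :=
  (restrict t A).elim [] leafList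

lemma rLeafList_eq (t : HTree n) (A : Finset (Fin n)) :
    rLeafList t A = t.leafList.filter (fun v => v ∈ A) := by
  induction t with
  | leaf v =>
    by_cases h : v ∈ A <;> simp [rLeafList, restrict, leafList, h]
  | node l r ihl ihr =>
    rw [leafList, List.filter_append, ← ihl, ← ihr]
    rcases hl : restrict l A with _ | l' <;> rcases hr : restrict r A with _ | r' <;>
      simp [rLeafList, restrict, hl, hr, leafList]

lemma rleaves_eq (t : HTree n) (A : Finset (Fin n)) :
    (rLeafList t A).toFinset = t.leaves ∩ A := by
  rw [rLeafList_eq, List.toFinset_filter]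
  ext x
  simp [leaves]

/-- Cost of the restriction. -/
def rcost (w : Fin n → Fin n → ℝ) (t : HTree n) (A : Finset (Fin n)) : ℝ :=
  (restrict t A).elim 0 (splitCost w)

lemma rcost_nonneg (hw : ∀ i j, 0 ≤ w i j) (t : HTree n) (A : Finset (Fin n)) :
    0 ≤ rcost w t A := by
  unfold rcost
  rcases restrict t A with _ | t'
  · exact le_refl 0
  · exact splitCost_nonneg hw t'

lemma rcost_node_le (hw : ∀ i j, 0 ≤ w i j) (l r : HTree n) (A : Finset (Fin n)) :
    rcost w (.node l r) A ≤
      (((l.leaves ∪ r.leaves) ∩ A).card : ℝ) * cut w (l.leaves ∩ A) (r.leaves ∩ A)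
        + rcost w l A + rcost w r A := by
  have hl' : ∀ l', restrict l A = some l' → l'.leaves = l.leaves ∩ A := by
    intro l' h
    have := rleaves_eq l A
    rwa [rLeafList, h, Option.elim] at this
  have hr' : ∀ r', restrict r A = some r' → r'.leaves = r.leaves ∩ A := by
    intro r' h
    have := rleaves_eq r A
    rwa [rLeafList, h, Option.elim] at this
  have hcn : 0 ≤ cut w (l.leaves ∩ A) (r.leaves ∩ A) := cut_nonneg hw _ _
  have hcc : (0:ℝ) ≤ (((l.leaves ∪ r.leaves) ∩ A).card : ℝ) * cut w (l.leaves ∩ A) (r.leaves ∩ A) :=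
    by positivity
  rcases hl : restrict l A with _ | l' <;> rcases hr : restrict r A with _ | r' <;>
    simp only [rcost, restrict, hl, hr, Option.elim]
  · linarith
  · have := splitCost_nonneg hw r'
    linarith
  · have := splitCost_nonneg hw l'
    linarith
  · simp only [splitCost]
    rw [hl' l' hl, hr' r' hr]
    have hcard : ((l.leaves ∩ A) ∪ (r.leaves ∩ A)).card ≤ ((l.leaves ∪ r.leaves) ∩ A).card := by
      apply Finset.card_le_card
      rw [Finset.union_inter_distrib_right]
    have := mul_le_mul_of_nonneg_right (by exact_mod_cast hcard :
      (((l.leaves ∩ A) ∪ (r.leaves ∩ A)).card : ℝ) ≤ (((l.leaves ∪ r.leaves) ∩ A).card : ℝ)) hcn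
    linarith

lemma rcost_add_le (hw : ∀ i j, 0 ≤ w i j) (t : HTree n) {A B : Finset (Fin n)}
    (hAB : Disjoint A B) : rcost w t A + rcost w t B ≤ splitCost w t := by
  induction t with
  | leaf v =>
    have h1 : rcost w (.leaf v) A = 0 := by
      unfold rcost restrict; by_cases h : v ∈ A <;> simp [h, splitCost]
    have h2 : rcost w (.leaf v) B = 0 := by
      unfold rcost restrict; by_cases h : v ∈ B <;> simp [h, splitCost]
    rw [h1, h2, splitCost]; norm_num
  | node l r ihl ihr =>
    have hA := rcost_node_le hw l r A
    have hB := rcost_node_le hw l r B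
    set L := l.leaves with hL
    set R := r.leaves with hR
    have hcardA : ((L ∪ R) ∩ A).card ≤ (L ∪ R).card := Finset.card_le_card Finset.inter_subset_left
    have hcardB : ((L ∪ R) ∩ B).card ≤ (L ∪ R).card := Finset.card_le_card Finset.inter_subset_left
    have hcut : cut w (L ∩ A) (R ∩ A) + cut w (L ∩ B) (R ∩ B) ≤ cut w L R := by
      have hdL : Disjoint (L ∩ A) (L ∩ B) :=
        hAB.mono Finset.inter_subset_right Finset.inter_subset_right
      have hdR : Disjoint (R ∩ A) (R ∩ B) :=
        hAB.mono Finset.inter_subset_right Finset.inter_subset_right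
      have e1 : cut w ((L ∩ A) ∪ (L ∩ B)) ((R ∩ A) ∪ (R ∩ B)) =
          cut w (L ∩ A) ((R ∩ A) ∪ (R ∩ B)) + cut w (L ∩ B) ((R ∩ A) ∪ (R ∩ B)) :=
        cut_union_left hdL _
      have e2 : cut w (L ∩ A) ((R ∩ A) ∪ (R ∩ B)) = cut w (L ∩ A) (R ∩ A) + cut w (L ∩ A) (R ∩ B) :=
        cut_union_right hdR _
      have e3 : cut w (L ∩ B) ((R ∩ A) ∪ (R ∩ B)) = cut w (L ∩ B) (R ∩ A) + cut w (L ∩ B) (R ∩ B) :=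
        cut_union_right hdR _
      have hle : cut w ((L ∩ A) ∪ (L ∩ B)) ((R ∩ A) ∪ (R ∩ B)) ≤ cut w L R := by
        calc cut w ((L ∩ A) ∪ (L ∩ B)) ((R ∩ A) ∪ (R ∩ B))
            ≤ cut w L ((R ∩ A) ∪ (R ∩ B)) := cut_mono_left hw
              (Finset.union_subset Finset.inter_subset_left Finset.inter_subset_left) _
          _ ≤ cut w L R := cut_mono_right hw
              (Finset.union_subset Finset.inter_subset_left Finset.inter_subset_left) _
      have n1 : 0 ≤ cut w (L ∩ A) (R ∩ B) := cut_nonneg hw _ _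
      have n2 : 0 ≤ cut w (L ∩ B) (R ∩ A) := cut_nonneg hw _ _
      linarith
    have hcA : 0 ≤ cut w (L ∩ A) (R ∩ A) := cut_nonneg hw _ _
    have hcB : 0 ≤ cut w (L ∩ B) (R ∩ B) := cut_nonneg hw _ _
    have m1 : (((L ∪ R) ∩ A).card : ℝ) * cut w (L ∩ A) (R ∩ A)
        ≤ ((L ∪ R).card : ℝ) * cut w (L ∩ A) (R ∩ A) :=
      mul_le_mul_of_nonneg_right (by exact_mod_cast hcardA) hcA
    have m2 : (((L ∪ R) ∩ B).card : ℝ) * cut w (L ∩ B) (R ∩ B)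
        ≤ ((L ∪ R).card : ℝ) * cut w (L ∩ B) (R ∩ B) :=
      mul_le_mul_of_nonneg_right (by exact_mod_cast hcardB) hcB
    have hcards : (0:ℝ) ≤ ((L ∪ R).card : ℝ) := by positivity
    rw [splitCost]
    nlinarith [mul_le_mul_of_nonneg_left hcut hcards]


lemma restrict_spec (t : HTree n) {S₁ : Finset (Fin n)} (hnd : t.leafList.Nodup)
    (hsub : S₁ ⊆ t.leaves) (hne : S₁.Nonempty) :
    ∃ t₁ : HTree n, restrict t S₁ = some t₁ ∧ t₁.leafList.Nodup ∧ t₁.leaves = S₁ ∧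
      splitCost w t₁ = rcost w t S₁ := by
  have hfin : (rLeafList t S₁).toFinset = S₁ := by
    rw [rleaves_eq]
    exact Finset.inter_eq_right.2 hsub
  rcases h : restrict t S₁ with _ | t₁
  · exfalso
    rw [rLeafList, h, Option.elim] at hfin
    simp only [List.toFinset_nil] at hfin
    exact hne.ne_empty hfin.symm
  · have hll : t₁.leafList = rLeafList t S₁ := by rw [rLeafList, h, Option.elim]
    refine ⟨t₁, rfl, ?_, ?_, ?_⟩
    · rw [hll, rLeafList_eq]
      exact hnd.filter _
    · rw [leaves, hll, hfin]
    · rw [rcost, h, Option.elim]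

/-- The optimal cost of a hierarchical clustering tree on leaf set `S`. -/
noncomputable def OPT (w : Fin n → Fin n → ℝ) (S : Finset (Fin n)) : ℝ :=
  sInf {c | ∃ t : HTree n, t.leafList.Nodup ∧ t.leaves = S ∧ splitCost w t = c}

lemma OPT_nonneg (hw : ∀ i j, 0 ≤ w i j) (S : Finset (Fin n)) : 0 ≤ OPT w S :=
  Real.sInf_nonneg (by rintro c ⟨t, -, -, rfl⟩; exact splitCost_nonneg hw t)

lemma OPT_le (hw : ∀ i j, 0 ≤ w i j) {S : Finset (Fin n)} {t : HTree n}
    (hnd : t.leafList.Nodup) (hlv : t.leaves = S) : OPT w S ≤ splitCost w t :=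
  csInf_le ⟨0, by rintro c ⟨t', -, -, rfl⟩; exact splitCost_nonneg hw t'⟩ ⟨t, hnd, hlv, rfl⟩

lemma le_OPT {S : Finset (Fin n)} (hS : S.Nonempty) {a : ℝ}
    (h : ∀ t : HTree n, t.leafList.Nodup → t.leaves = S → a ≤ splitCost w t) :
    a ≤ OPT w S := by
  apply le_csInf
  · rcases exists_tree hS with ⟨t, h1, h2⟩
    exact ⟨splitCost w t, t, h1, h2, rfl⟩
  · rintro c ⟨t, h1, h2, rfl⟩
    exact h t h1 h2

lemma OPT_subadd (hw : ∀ i j, 0 ≤ w i j) {S₁ S₂ : Finset (Fin n)}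
    (h₁ : S₁.Nonempty) (h₂ : S₂.Nonempty) (hd : Disjoint S₁ S₂) :
    OPT w S₁ + OPT w S₂ ≤ OPT w (S₁ ∪ S₂) := by
  apply le_OPT (h₁.mono Finset.subset_union_left)
  intro t hnd hlv
  rcases restrict_spec t hnd (hlv ▸ Finset.subset_union_left) h₁ with ⟨t₁, -, hn1, hl1, hc1⟩
  rcases restrict_spec t hnd (hlv ▸ Finset.subset_union_right) h₂ with ⟨t₂, -, hn2, hl2, hc2⟩
  have := rcost_add_le hw t hd
  have g1 : OPT w S₁ ≤ rcost w t S₁ := hc1 ▸ OPT_le hw hn1 hl1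
  have g2 : OPT w S₂ ≤ rcost w t S₂ := hc2 ▸ OPT_le hw hn2 hl2
  linarith


lemma cut_comm (hsymm : ∀ i j, w i j = w j i) (A B : Finset (Fin n)) :
    cut w A B = cut w B A := by
  unfold cut
  rw [Finset.sum_comm]
  exact Finset.sum_congr rfl fun i _ => Finset.sum_congr rfl fun j _ => hsymm j i

lemma union_sdiff_left' {A B : Finset (Fin n)} (h : Disjoint A B) : (A ∪ B) \ A = B := by
  ext x
  rw [Finset.disjoint_left] at h
  simp only [Finset.mem_sdiff, Finset.mem_union]
  constructor
  · rintro ⟨h1 | h1, h2⟩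
    · exact absurd h1 h2
    · exact h1
  · intro hx
    exact ⟨Or.inr hx, fun hxA => h hxA hx⟩

lemma union_sdiff_right' {A B : Finset (Fin n)} (h : Disjoint A B) : (A ∪ B) \ B = A := by
  rw [Finset.union_comm]
  exact union_sdiff_left' h.symm

/-- Fact (i): descending into the larger child, one finds a balanced cut whose
weight is at most `3/(2m)` times the cost. (Stated in a denominator-free form.) -/
lemma descend (hw : ∀ i j, 0 ≤ w i j) (hsymm : ∀ i j, w i j = w j i) (m : ℕ) (hm : 2 ≤ m)
    (t : HTree n) (hnd : t.leafList.Nodup) (hbig : (2*m : ℝ) < 3 * t.leaves.card) :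
    ∃ A : Finset (Fin n), A ⊆ t.leaves ∧ (m:ℝ) ≤ 3 * A.card ∧ (3:ℝ) * A.card ≤ 2 * m ∧
      (2*m : ℝ) * cut w A (t.leaves \ A) ≤ 3 * splitCost w t := by
  have hm' : (2:ℝ) ≤ (m:ℝ) := by exact_mod_cast hm
  induction t with
  | leaf v =>
    exfalso
    have h1 : (HTree.leaf v : HTree n).leaves.card = 1 := by simp [leaves, leafList]
    rw [h1] at hbig
    push_cast at hbig
    linarith
  | node l r ihl ihr =>
    obtain ⟨hndl, hndr, hd⟩ := nodup_node hnd
    set L := l.leaves with hL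
    set R := r.leaves with hR
    have hlv : (HTree.node l r).leaves = L ∪ R := leaves_node l r
    have hcard : (L ∪ R).card = L.card + R.card := Finset.card_union_of_disjoint hd
    have ha1 : 1 ≤ L.card := card_leaves_pos l
    have hb1 : 1 ≤ R.card := card_leaves_pos r
    have hs : ((HTree.node l r).leaves.card : ℝ) = (L.card : ℝ) + (R.card : ℝ) := by
      rw [hlv, hcard]; push_cast; ring
    have hcutLR : 0 ≤ cut w L R := cut_nonneg hw _ _
    have hcl : 0 ≤ splitCost w l := splitCost_nonneg hw l
    have hcr : 0 ≤ splitCost w r := splitCost_nonneg hw r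
    have hcost : splitCost w (.node l r) =
        ((L ∪ R).card : ℝ) * cut w L R + splitCost w l + splitCost w r := rfl
    have hsc : ((L ∪ R).card : ℝ) = (L.card : ℝ) + (R.card : ℝ) := by
      rw [hcard]; push_cast; ring
    rw [hs] at hbig
    rcases le_or_gt (3*(L.card:ℝ)) (2*m) with ha2 | ha2
    · rcases le_or_gt (3*(R.card:ℝ)) (2*m) with hb2 | hb2
      · rcases le_or_gt (m:ℝ) (3*(L.card:ℝ)) with h | h
        · -- take A = L
          refine ⟨L, hlv ▸ Finset.subset_union_left, h, ha2, ?_⟩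
          rw [hlv, union_sdiff_left' hd, hcost, hsc]
          nlinarith [mul_le_mul_of_nonneg_left hbig.le hcutLR]
        · -- take A = R
          refine ⟨R, hlv ▸ Finset.subset_union_right, by linarith, hb2, ?_⟩
          rw [hlv, union_sdiff_right' hd, hcost, hsc, cut_comm hsymm R L]
          nlinarith [mul_le_mul_of_nonneg_left hbig.le hcutLR]
      · -- recurse into r
        obtain ⟨A, hsub, hA1, hA2, hA3⟩ := ihr hndr hb2
        refine ⟨A, hlv ▸ hsub.trans Finset.subset_union_right, hA1, hA2, ?_⟩
        have hsd : (HTree.node l r).leaves \ A = L ∪ (R \ A) := by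
          rw [hlv, Finset.union_sdiff_distrib,
            Finset.sdiff_eq_self_of_disjoint (hd.symm.mono_left hsub).symm]
        have hdLRA : Disjoint L (R \ A) := hd.mono_right (Finset.sdiff_subset)
        have hAL : cut w A L ≤ cut w L R :=
          (cut_mono_left hw hsub L).trans_eq (cut_comm hsymm R L)
        rw [hsd, cut_union_right hdLRA, hcost, hsc]
        nlinarith [mul_le_mul_of_nonneg_left hAL (by positivity : (0:ℝ) ≤ 2*(m:ℝ)),
          mul_le_mul_of_nonneg_left hbig.le hcutLR]
    · -- recurse into l
      obtain ⟨A, hsub, hA1, hA2, hA3⟩ := ihl hndl ha2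
      refine ⟨A, hlv ▸ hsub.trans Finset.subset_union_left, hA1, hA2, ?_⟩
      have hsd : (HTree.node l r).leaves \ A = (L \ A) ∪ R := by
        rw [hlv, Finset.union_sdiff_distrib,
          Finset.sdiff_eq_self_of_disjoint (hd.mono_left hsub).symm]
      have hdLAR : Disjoint (L \ A) R := hd.mono_left (Finset.sdiff_subset)
      have hAR : cut w A R ≤ cut w L R := cut_mono_left hw hsub R
      rw [hsd, cut_union_right hdLAR, hcost, hsc]
      nlinarith [mul_le_mul_of_nonneg_left hAR (by positivity : (0:ℝ) ≤ 2*(m:ℝ)),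
        mul_le_mul_of_nonneg_left hbig.le hcutLR]


end HTree

namespace HTree

/-- Every internal split of the tree is an `α_{|S|}`-approximation to the sparsest
cut of its leaf set `S`: its sparsity `w(S₁,S₂)/(|S₁||S₂|)` is at most `α_{|S|}`
times the sparsity of every cut of `S`. -/
def SparseSplits (w : Fin n → Fin n → ℝ) (α : ℕ → ℝ) : HTree n → Prop
  | .leaf _ => True
  | .node l r =>
      (∀ A : Finset (Fin n), A ⊆ l.leaves ∪ r.leaves → A.Nonempty →
          ((l.leaves ∪ r.leaves) \ A).Nonempty →
          cut w l.leaves r.leaves / ((l.leaves.card : ℝ) * (r.leaves.card : ℝ))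
            ≤ α (l.leaves ∪ r.leaves).card *
                (cut w A ((l.leaves ∪ r.leaves) \ A)
                  / ((A.card : ℝ) * (((l.leaves ∪ r.leaves) \ A).card : ℝ))))
        ∧ SparseSplits w α l ∧ SparseSplits w α r

end HTree


namespace HTree
variable {n : ℕ} {w : Fin n → Fin n → ℝ}

/-- Pure arithmetic: the chain bounding the top cut by the optimum. -/
lemma arith_key {αs cLR cA c' a b s x y : ℝ} (ha1 : 1 ≤ a) (hb1 : 1 ≤ b) (hs : s = a + b)
    (hα : 0 < αs) (hx : s ≤ 3*x) (hx2 : 3*x ≤ 2*s) (hy : y = s - x)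
    (hcLR : 0 ≤ cLR) (hcA : 0 ≤ cA) (hc' : 0 ≤ c')
    (h1 : cLR * (x*y) ≤ αs * cA * (a*b)) (h3 : 2*s*cA ≤ 3*c') :
    4*s^3*cLR ≤ 27*αs*(a*b)*c' := by
  have hs2 : (2:ℝ) ≤ s := by linarith
  have hprod : 2*s^2 ≤ 9*(x*y) := by
    rw [hy]
    nlinarith [mul_nonneg (by linarith : (0:ℝ) ≤ 3*x - s) (by linarith : (0:ℝ) ≤ 2*s - 3*x)]
  have e1 : 2*s^2*cLR ≤ 9*(αs*cA*(a*b)) := by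
    nlinarith [mul_le_mul_of_nonneg_right hprod hcLR]
  have e2 := mul_le_mul_of_nonneg_left e1 (by linarith : (0:ℝ) ≤ 2*s)
  have hab : (0:ℝ) < a*b := mul_pos (by linarith) (by linarith)
  have e3 := mul_le_mul_of_nonneg_left h3
    (by nlinarith [mul_pos hα hab] : (0:ℝ) ≤ 9*αs*(a*b))
  nlinarith [e2, e3]

set_option maxHeartbeats 1000000 in
/-- Pure arithmetic: assembling the induction step. -/
lemma arith_final {αn Lg la lb O O1 O2 cl cr cLR a b s : ℝ}
    (hsum : s = a + b) (ha1 : 1 ≤ a) (hb1 : 1 ≤ b)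
    (hαn0 : 0 < αn) (hO1 : 0 ≤ O1) (hO2 : 0 ≤ O2) (hOsub : O1 + O2 ≤ O)
    (hkey : 4*s^3*cLR ≤ 27*αn*(a*b)*O)
    (hl : cl ≤ 27*αn/4 * la * O1) (hr : cr ≤ 27*αn/4 * lb * O2)
    (hla : la ≤ Lg - b/s) (hlb : lb ≤ Lg - a/s) (hLg : 1 ≤ 4*Lg) :
    s*cLR + cl + cr ≤ 27*αn/4 * Lg * O := by
  have hs0 : (0:ℝ) < s := by linarith
  have hO : 0 ≤ O := by linarith
  have eb : s*(Lg - b/s) = s*Lg - b := by field_simp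
  have ea : s*(Lg - a/s) = s*Lg - a := by field_simp
  have F4 : s*la ≤ s*Lg - b := by
    have h := mul_le_mul_of_nonneg_left hla hs0.le
    rw [eb] at h
    exact h
  have F5 : s*lb ≤ s*Lg - a := by
    have h := mul_le_mul_of_nonneg_left hlb hs0.le
    rw [ea] at h
    exact h
  have c1 : (0:ℝ) ≤ 27*αn*s*O1 := by positivity
  have c2 : (0:ℝ) ≤ 27*αn*s*O2 := by positivity
  have hl4 := mul_le_mul_of_nonneg_left hl (by positivity : (0:ℝ) ≤ 4*s^2)
  have hr4 := mul_le_mul_of_nonneg_left hr (by positivity : (0:ℝ) ≤ 4*s^2)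
  have F4s := mul_le_mul_of_nonneg_left F4 c1
  have F5s := mul_le_mul_of_nonneg_left F5 c2
  have H2 : 4*s^2*cl ≤ 27*αn*s*O1*(s*Lg - b) := by nlinarith [hl4, F4s]
  have H3 : 4*s^2*cr ≤ 27*αn*s*O2*(s*Lg - a) := by nlinarith [hr4, F5s]
  have q1 : (0:ℝ) ≤ (s^2*Lg - a*b)*(O - O1 - O2) := by
    apply mul_nonneg _ (by linarith)
    nlinarith [mul_nonneg (sq_nonneg s) (by linarith : (0:ℝ) ≤ 4*Lg - 1), sq_nonneg (a-b)]
  have q2 : (0:ℝ) ≤ (s*b - a*b)*O1 := mul_nonneg (by nlinarith [sq_nonneg b]) hO1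
  have q3 : (0:ℝ) ≤ (s*a - a*b)*O2 := mul_nonneg (by nlinarith [sq_nonneg a]) hO2
  have qQ : a*b*O + (s^2*Lg*O1 - s*b*O1) + (s^2*Lg*O2 - s*a*O2) ≤ s^2*Lg*O := by
    nlinarith [q1, q2, q3]
  have qQ' := mul_le_mul_of_nonneg_left qQ (by linarith : (0:ℝ) ≤ 27*αn)
  have GG : (4*s^2)*(s*cLR + cl + cr) ≤ (4*s^2)*(27*αn/4 * Lg * O) := by
    nlinarith [hkey, H2, H3, qQ']
  exact le_of_mul_le_mul_left GG (by positivity)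

set_option maxHeartbeats 2000000 in
lemma main_bound (hw : ∀ i j, 0 ≤ w i j) (hsymm : ∀ i j, w i j = w j i)
    (α : ℕ → ℝ) (hαpos : ∀ m, 0 < α m) (hαmono : Monotone α)
    (t : HTree n) (hnd : t.leafList.Nodup) (hsp : SparseSplits w α t) :
    splitCost w t ≤ 27 * α n / 4 * Real.log (t.leaves.card) * OPT w t.leaves := by
  induction t with
  | leaf v =>
    simp [splitCost, leaves, leafList, Real.log_one]
  | node l r ihl ihr =>
    obtain ⟨happrox, hsl, hsr⟩ := hsp
    obtain ⟨hndl, hndr, hd⟩ := nodup_node hnd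
    have hlv : (HTree.node l r).leaves = l.leaves ∪ r.leaves := leaves_node l r
    have hcardu : (l.leaves ∪ r.leaves).card = l.leaves.card + r.leaves.card :=
      Finset.card_union_of_disjoint hd
    have hsum : ((l.leaves ∪ r.leaves).card : ℝ) = (l.leaves.card : ℝ) + (r.leaves.card : ℝ) := by
      rw [hcardu]; push_cast; ring
    have ha1 : (1:ℝ) ≤ (l.leaves.card : ℝ) := by exact_mod_cast card_leaves_pos l
    have hb1 : (1:ℝ) ≤ (r.leaves.card : ℝ) := by exact_mod_cast card_leaves_pos r
    have hs2 : (2:ℝ) ≤ ((l.leaves ∪ r.leaves).card : ℝ) := by rw [hsum]; linarith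
    have hsR0 : (0:ℝ) < ((l.leaves ∪ r.leaves).card : ℝ) := by linarith
    have hsn : (l.leaves ∪ r.leaves).card ≤ n := by
      calc (l.leaves ∪ r.leaves).card ≤ Finset.univ.card := Finset.card_le_univ _
        _ = n := by simp
    have hαle : α (l.leaves ∪ r.leaves).card ≤ α n := hαmono hsn
    have hα0 : 0 < α (l.leaves ∪ r.leaves).card := hαpos _
    have hαn0 : 0 < α n := hαpos n
    have hcutLR : 0 ≤ cut w l.leaves r.leaves := cut_nonneg hw _ _
    have hO1 : 0 ≤ OPT w l.leaves := OPT_nonneg hw _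
    have hO2 : 0 ≤ OPT w r.leaves := OPT_nonneg hw _
    have hO0 : 0 ≤ OPT w (l.leaves ∪ r.leaves) := OPT_nonneg hw _
    have hOsub : OPT w l.leaves + OPT w r.leaves ≤ OPT w (l.leaves ∪ r.leaves) :=
      OPT_subadd hw (leaves_nonempty l) (leaves_nonempty r) hd
    -- Step A: bound the top cut against the optimum.
    have hkey : 4 * ((l.leaves ∪ r.leaves).card : ℝ)^3 * cut w l.leaves r.leaves ≤
        27 * α (l.leaves ∪ r.leaves).card * ((l.leaves.card : ℝ) * (r.leaves.card : ℝ)) *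
          OPT w (l.leaves ∪ r.leaves) := by
      have hK : (0:ℝ) < 27 * α (l.leaves ∪ r.leaves).card *
          ((l.leaves.card : ℝ) * (r.leaves.card : ℝ)) := by positivity
      rw [← div_le_iff₀' hK]
      apply le_OPT ((leaves_nonempty l).mono Finset.subset_union_left)
      intro t' hnd' hlv'
      rw [div_le_iff₀' hK]
      have hm2 : 2 ≤ (l.leaves ∪ r.leaves).card := by
        have h1 : 0 < l.leaves.card := card_leaves_pos l
        have h2 : 0 < r.leaves.card := card_leaves_pos r
        omega
      have hbig : (2*(l.leaves ∪ r.leaves).card : ℝ) < 3 * t'.leaves.card := by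
        rw [hlv']; linarith
      obtain ⟨A, hAsub, hA1, hA2, hA3⟩ :=
        descend hw hsymm (l.leaves ∪ r.leaves).card hm2 t' hnd' hbig
      rw [hlv'] at hAsub hA3
      have hAne : A.Nonempty := by
        rw [← Finset.card_pos]
        rcases Nat.eq_zero_or_pos A.card with h0 | h0
        · exfalso
          rw [h0] at hA1
          push_cast at hA1
          linarith
        · exact h0
      have hAcne : ((l.leaves ∪ r.leaves) \ A).Nonempty := by
        rw [← Finset.card_pos, Finset.card_sdiff_of_subset hAsub]
        have h3 : 3 * A.card ≤ 2 * (l.leaves ∪ r.leaves).card := by exact_mod_cast hA2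
        omega
      have h1 := happrox A hAsub hAne hAcne
      have hab : (0:ℝ) < (l.leaves.card : ℝ) * (r.leaves.card : ℝ) := by positivity
      have hx0 : (0:ℝ) < (A.card : ℝ) := by exact_mod_cast Finset.card_pos.2 hAne
      have hy0 : (0:ℝ) < ((((l.leaves ∪ r.leaves) \ A).card : ℝ)) := by
        exact_mod_cast Finset.card_pos.2 hAcne
      have hxy0 : (0:ℝ) < (A.card : ℝ) * (((l.leaves ∪ r.leaves) \ A).card : ℝ) := by positivity
      rw [← mul_div_assoc, div_le_div_iff₀ hab hxy0] at h1
      have hycard : ((((l.leaves ∪ r.leaves) \ A).card : ℝ)) =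
          ((l.leaves ∪ r.leaves).card : ℝ) - (A.card : ℝ) := by
        rw [Finset.card_sdiff_of_subset hAsub,
          Nat.cast_sub (Finset.card_le_card hAsub)]
      exact arith_key ha1 hb1 hsum hα0 hA1 hA2 hycard hcutLR (cut_nonneg hw _ _)
        (splitCost_nonneg hw t') h1 hA3
    -- Step B: recursive bounds.
    have hl' := ihl hndl hsl
    have hr' := ihr hndr hsr
    -- Step C: logarithm estimates.
    have ha0 : (0:ℝ) < (l.leaves.card : ℝ) := by linarith
    have hb0 : (0:ℝ) < (r.leaves.card : ℝ) := by linarith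
    have hlog_a : Real.log (l.leaves.card : ℝ) ≤ Real.log ((l.leaves ∪ r.leaves).card : ℝ) -
        (r.leaves.card : ℝ) / ((l.leaves ∪ r.leaves).card : ℝ) := by
      have h := Real.log_le_sub_one_of_pos
        (show (0:ℝ) < (l.leaves.card : ℝ) / ((l.leaves ∪ r.leaves).card : ℝ) by positivity)
      rw [Real.log_div ha0.ne' hsR0.ne'] at h
      have e : (l.leaves.card : ℝ) / ((l.leaves ∪ r.leaves).card : ℝ) - 1 =
          -((r.leaves.card : ℝ) / ((l.leaves ∪ r.leaves).card : ℝ)) := by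
        field_simp
        try linarith
      linarith [e ▸ h]
    have hlog_b : Real.log (r.leaves.card : ℝ) ≤ Real.log ((l.leaves ∪ r.leaves).card : ℝ) -
        (l.leaves.card : ℝ) / ((l.leaves ∪ r.leaves).card : ℝ) := by
      have h := Real.log_le_sub_one_of_pos
        (show (0:ℝ) < (r.leaves.card : ℝ) / ((l.leaves ∪ r.leaves).card : ℝ) by positivity)
      rw [Real.log_div hb0.ne' hsR0.ne'] at h
      have e : (r.leaves.card : ℝ) / ((l.leaves ∪ r.leaves).card : ℝ) - 1 =
          -((l.leaves.card : ℝ) / ((l.leaves ∪ r.leaves).card : ℝ)) := by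
        field_simp
        try linarith
      linarith [e ▸ h]
    have hLg4 : (1:ℝ) ≤ 4 * Real.log ((l.leaves ∪ r.leaves).card : ℝ) := by
      have h2 : Real.log 2 ≤ Real.log ((l.leaves ∪ r.leaves).card : ℝ) :=
        Real.log_le_log (by norm_num) hs2
      have := Real.log_two_gt_d9
      linarith
    -- Step D: assemble.
    have hkey' : 4 * ((l.leaves ∪ r.leaves).card : ℝ)^3 * cut w l.leaves r.leaves ≤
        27 * α n * ((l.leaves.card : ℝ) * (r.leaves.card : ℝ)) *
          OPT w (l.leaves ∪ r.leaves) := by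
      refine hkey.trans ?_
      have : (0:ℝ) ≤ ((l.leaves.card : ℝ) * (r.leaves.card : ℝ)) *
          OPT w (l.leaves ∪ r.leaves) := by positivity
      nlinarith [mul_le_mul_of_nonneg_right hαle this]
    have hfin := arith_final hsum ha1 hb1 hαn0 hO1 hO2 hOsub hkey' hl' hr'
      hlog_a hlog_b hLg4
    rw [hlv]
    show ((l.leaves ∪ r.leaves).card : ℝ) * cut w l.leaves r.leaves + splitCost w l +
        splitCost w r ≤ _
    linarith [hfin]

end HTree

/-- The top-down heuristic that recursively splits using an `α`-approximate
sparsest cut returns a tree of cost at most `(27 α_n / 4) ln n` times optimal. -/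
theorem topdown_approximation (n : ℕ) (w : Fin n → Fin n → ℝ)
    (hsymm : ∀ i j, w i j = w j i) (hnonneg : ∀ i j, 0 ≤ w i j)
    (α : ℕ → ℝ) (hαpos : ∀ m, 0 < α m) (hαmono : Monotone α)
    (T : HTree n) (hT : T.IsFullTree) (halg : T.SparseSplits w α)
    (Tstar : HTree n) (hTs : Tstar.IsFullTree)
    (hopt : ∀ T' : HTree n, T'.IsFullTree → Tstar.splitCost w ≤ T'.splitCost w) :
    T.splitCost w ≤ (27 * α n / 4) * Real.log n * Tstar.splitCost w := by
  rcases Nat.eq_zero_or_pos n with hn | hn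
  · exfalso
    subst hn
    rcases List.exists_mem_of_ne_nil _ (HTree.leafList_ne_nil T) with ⟨v, -⟩
    exact v.elim0
  · have hmb := HTree.main_bound hnonneg hsymm α hαpos hαmono T hT.1 halg
    rw [hT.2] at hmb
    have hcard : ((Finset.univ : Finset (Fin n)).card : ℝ) = (n : ℝ) := by simp
    rw [hcard] at hmb
    have hOle : HTree.OPT w Finset.univ ≤ Tstar.splitCost w :=
      HTree.OPT_le hnonneg hTs.1 hTs.2
    have hlog : (0:ℝ) ≤ Real.log n := Real.log_nonneg (by exact_mod_cast hn)
    have hK : (0:ℝ) ≤ 27 * α n / 4 * Real.log n := by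
      have := (hαpos n).le
      have h1 : (0:ℝ) ≤ 27 * α n / 4 := by linarith
      exact mul_nonneg h1 hlog
    calc T.splitCost w ≤ 27 * α n / 4 * Real.log n * HTree.OPT w Finset.univ := hmb
      _ ≤ 27 * α n / 4 * Real.log n * Tstar.splitCost w :=
        mul_le_mul_of_nonneg_left hOle hK
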